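/- Let Φ be an enriched GMSNP τ-sentence, τ = {R₁,…,R_t}, and Φ¹ the τ₁-sentence obtained by the concatenation construction, where τ₁ = {P}. For a τ-structure A, let A₁ be the τ₁-structure on the same domain defined by: P^{A₁}(ā₁,…,ā_t) holds if and only if R₁^A(ā₁) and … and R_t^A(ā_t) all hold. Then A ⊨ Φ if and only if A₁ ⊨ Φ¹. -/

import Mathlib

/-- A finite relational signature: a type of relation symbols together with arities. -/
structure Signature where
  symb : Type
  arity : symb → ℕ

/-- A relational structure over signature `τ`: a domain together with an
interpretation of every relation symbol as a set of tuples. -/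
structure Struct (τ : Signature) where
  Dom : Type
  rel : ∀ r : τ.symb, Set (Fin (τ.arity r) → Dom)

/-- A homomorphism of `τ`-structures: a map of domains preserving every relation. -/
def IsHom {τ : Signature} (A B : Struct τ) (h : A.Dom → B.Dom) : Prop :=
  ∀ r : τ.symb, ∀ t ∈ A.rel r, (fun i => h (t i)) ∈ B.rel r

/-- A negated conjunct `¬(α ∧ β ∧ ε)` of an SNP sentence: a set of first-order
variables, a list of signed `τ`-atoms (`true` = positive), a list of signed
`σ`-atoms, and a list of inequalities between variables. -/
structure Conjunct (τ σ : Signature) where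
  Vars : Type
  tlits : List (Bool × (Σ r : τ.symb, Fin (τ.arity r) → Vars))
  slits : List (Bool × (Σ X : σ.symb, Fin (σ.arity X) → Vars))
  ineqs : List (Vars × Vars)

/-- An SNP sentence `∃X₁…Xₛ ∀x̄ ⋀ᵢ ¬(αᵢ ∧ βᵢ ∧ εᵢ)` over input signature `τ`
and existential signature `σ`, given by its list of negated conjuncts. -/
structure SNP (τ σ : Signature) where
  conjs : List (Conjunct τ σ)

/-- The conjunction `α ∧ β ∧ ε` inside a negated conjunct holds under given
interpretations of the `τ`- and `σ`-symbols and an assignment `v` of the variables. -/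
def Conjunct.HoldsUnder {τ σ : Signature} (c : Conjunct τ σ) {D : Type}
    (rt : ∀ r : τ.symb, Set (Fin (τ.arity r) → D))
    (rs : ∀ X : σ.symb, Set (Fin (σ.arity X) → D))
    (v : c.Vars → D) : Prop :=
  (∀ l ∈ c.tlits, if l.1 = true then (fun i => v (l.2.2 i)) ∈ rt l.2.1
      else (fun i => v (l.2.2 i)) ∉ rt l.2.1) ∧
  (∀ l ∈ c.slits, if l.1 = true then (fun i => v (l.2.2 i)) ∈ rs l.2.1
      else (fun i => v (l.2.2 i)) ∉ rs l.2.1) ∧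
  (∀ p ∈ c.ineqs, v p.1 ≠ v p.2)

/-- `A ⊨ Φ`: there is an interpretation of the existential symbols such that
every negated conjunct is falsified by every assignment of the variables. -/
def SNP.Sat {τ σ : Signature} (Φ : SNP τ σ) (A : Struct τ) : Prop :=
  ∃ rs : ∀ X : σ.symb, Set (Fin (σ.arity X) → A.Dom),
    ∀ c ∈ Φ.conjs, ∀ v : c.Vars → A.Dom, ¬ c.HoldsUnder A.rel rs v

/-- Φ is monotone: no negated `τ`-atoms occur. -/
def SNP.MonotoneSNP {τ σ : Signature} (Φ : SNP τ σ) : Prop :=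
  ∀ c ∈ Φ.conjs, ∀ l ∈ c.tlits, l.1 = true

/-- Φ is without inequality: each εᵢ is empty. -/
def SNP.NoIneq {τ σ : Signature} (Φ : SNP τ σ) : Prop :=
  ∀ c ∈ Φ.conjs, c.ineqs = []

/-- Every negated σ-atom is guarded by a τ-atom or by a nonnegated σ-atom. -/
def Conjunct.Guarded {τ σ : Signature} (c : Conjunct τ σ) : Prop :=
  ∀ l ∈ c.slits, l.1 = false →
    (∃ g ∈ c.tlits, Set.range l.2.2 ⊆ Set.range g.2.2) ∨
    (∃ g ∈ c.slits, g.1 = true ∧ Set.range l.2.2 ⊆ Set.range g.2.2)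

/-- Φ is in guarded monotone SNP (GMSNP). -/
def SNP.GMSNP {τ σ : Signature} (Φ : SNP τ σ) : Prop :=
  Φ.MonotoneSNP ∧ Φ.NoIneq ∧ ∀ c ∈ Φ.conjs, c.Guarded

/-- The list of variable sets of the literals of a conjunct. -/
def Conjunct.litVars {τ σ : Signature} (c : Conjunct τ σ) : List (Set c.Vars) :=
  c.tlits.map (fun l => Set.range l.2.2) ++ c.slits.map (fun l => Set.range l.2.2) ++
    c.ineqs.map (fun p => {p.1, p.2})

/-- A conjunct is connected: it cannot be split into two nonempty parts
whose variable sets are disjoint. -/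
def Conjunct.Connected {τ σ : Signature} (c : Conjunct τ σ) : Prop :=
  ∀ S : Set (Fin c.litVars.length), S.Nonempty → Sᶜ.Nonempty →
    ∃ i ∈ S, ∃ j ∈ Sᶜ, ∃ x : c.Vars, x ∈ c.litVars.get i ∧ x ∈ c.litVars.get j

/-- An SNP sentence is connected if all its negated conjuncts are. -/
def SNP.Connected {τ σ : Signature} (Φ : SNP τ σ) : Prop :=
  ∀ c ∈ Φ.conjs, c.Connected

/-- Disjoint union of two `τ`-structures. -/
def Struct.dsum {τ : Signature} (A B : Struct τ) : Struct τ where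
  Dom := A.Dom ⊕ B.Dom
  rel r := {t | (∃ t' ∈ A.rel r, t = fun i => Sum.inl (t' i)) ∨
                (∃ t' ∈ B.rel r, t = fun i => Sum.inr (t' i))}

/-- Disjoint union of a family of `τ`-structures. -/
def Struct.dSigma {τ : Signature} {I : Type} (F : I → Struct τ) : Struct τ where
  Dom := Σ i, (F i).Dom
  rel r := {t | ∃ i, ∃ t' ∈ (F i).rel r, t = fun j => ⟨i, t' j⟩}

/-- The structure `B_R` consisting of a single `R`-tuple of pairwise distinct elements. -/
def BStruct (τ : Signature) (R : τ.symb) : Struct τ where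
  Dom := Fin (τ.arity R)
  rel S := {t | ∃ h : S = R, ∀ i, t i = Fin.cast (congrArg τ.arity h) i}

/-- The signature `τ = {R₁,…,R_t}` with arities `a`. -/
def finSig (t : ℕ) (a : Fin t → ℕ) : Signature := ⟨Fin t, a⟩

/-- The signature `τ₁ = {P}` with a single symbol of arity `Σⱼ arity(Rⱼ)`. -/
def oneSig (t : ℕ) (a : Fin t → ℕ) : Signature := ⟨Unit, fun _ => ∑ j, a j⟩

/-- `e` is the canonical (order-preserving) bijection identifying a position in the
concatenation `(ȳ₁,…,ȳ_t)` with a pair (index `j`, position in `ȳⱼ`). -/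
def IsConcatEquiv {t : ℕ} {a : Fin t → ℕ}
    (e : (Σ j : Fin t, Fin (a j)) ≃ Fin (∑ j, a j)) : Prop :=
  ∀ p q : Σ j : Fin t, Fin (a j),
    (p.1 < q.1 ∨ (p.1 = q.1 ∧ (p.2 : ℕ) < (q.2 : ℕ))) → e p < e q

/-- Φ is enriched: every negated conjunct contains at least one `R`-atom
for each symbol `R` of the input signature. -/
def SNP.Enriched {τ σ : Signature} (Φ : SNP τ σ) : Prop :=
  ∀ c ∈ Φ.conjs, ∀ R : τ.symb, ∃ l ∈ c.tlits, l.2.1 = R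

/-- The concatenation construction on a negated conjunct: σ-literals are kept, and
each τ-atom `Rⱼ(x̄)` is replaced by the atom `P(ȳ₁,…,ȳ_t)` where `ȳⱼ = x̄` and all
other variables are fresh and used only in that atom. -/
def Conjunct.concat {t : ℕ} {a : Fin t → ℕ} {σ : Signature}
    (e : (Σ j : Fin t, Fin (a j)) ≃ Fin (∑ j, a j))
    (c : Conjunct (finSig t a) σ) : Conjunct (oneSig t a) σ where
  Vars := c.Vars ⊕ (Fin c.tlits.length × Fin (∑ j, a j))
  tlits := List.ofFn (fun m : Fin c.tlits.length =>
    ((c.tlits.get m).1, ⟨(), fun k =>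
      @dite _ ((e.symm k).1 = (c.tlits.get m).2.1) (instDecidableEqFin t _ _) (fun h =>
        Sum.inl ((c.tlits.get m).2.2 (Fin.cast (congrArg a h) (e.symm k).2)))
      (fun _ => Sum.inr (m, k))⟩))
  slits := c.slits.map (fun l => (l.1, ⟨l.2.1, fun i => Sum.inl (l.2.2 i)⟩))
  ineqs := c.ineqs.map (fun p => (Sum.inl p.1, Sum.inl p.2))

/-- The sentence `Φ¹` over `τ₁ = {P}` obtained by the concatenation construction. -/
def SNP.concat {t : ℕ} {a : Fin t → ℕ} {σ : Signature}
    (e : (Σ j : Fin t, Fin (a j)) ≃ Fin (∑ j, a j))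
    (Φ : SNP (finSig t a) σ) : SNP (oneSig t a) σ :=
  ⟨Φ.conjs.map (Conjunct.concat e)⟩

/-- The `τ₁`-structure `A₁` on the same domain as `A`:
`P^{A₁}(ā₁,…,ā_t)` iff `Rⱼ^A(āⱼ)` for every `j`. -/
def Struct.toOne {t : ℕ} {a : Fin t → ℕ}
    (e : (Σ j : Fin t, Fin (a j)) ≃ Fin (∑ j, a j))
    (A : Struct (finSig t a)) : Struct (oneSig t a) where
  Dom := A.Dom
  rel := fun _ => {u | ∀ j : Fin t, (fun i => u (e ⟨j, i⟩)) ∈ A.rel j}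

/-- For an enriched GMSNP sentence `Φ` and the concatenated sentence `Φ¹`:
`A ⊨ Φ` iff `A₁ ⊨ Φ¹`. -/
private lemma cast_snd_eq {t : ℕ} {a : Fin t → ℕ} {p q : Σ j : Fin t, Fin (a j)}
    (hpq : p = q) (h : p.1 = q.1) : Fin.cast (congrArg a h) p.2 = q.2 := by
  subst hpq; exact Fin.ext rfl

private lemma sigma_app {t : ℕ} {a : Fin t → ℕ} {D : Type} (w : ∀ j, Fin (a j) → D)
    {p q : Σ j : Fin t, Fin (a j)} (h : p = q) : w p.1 p.2 = w q.1 q.2 := by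
  subst h; rfl

theorem sat_concat_toOne {t : ℕ} {a : Fin t → ℕ} {σ : Signature}
    (e : (Σ j : Fin t, Fin (a j)) ≃ Fin (∑ j, a j)) (he : IsConcatEquiv e)
    (Φ : SNP (finSig t a) σ) (hg : Φ.GMSNP) (henr : Φ.Enriched)
    (A : Struct (finSig t a)) :
    Φ.Sat A ↔ (Φ.concat e).Sat (A.toOne e) := by

  constructor
  · rintro ⟨rs, hrs⟩
    refine ⟨rs, ?_⟩
    intro c' hc' v' hH
    obtain ⟨c, hc, rfl⟩ := List.mem_map.mp hc'
    obtain ⟨hT, hS, hI⟩ := hH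
    simp only [Conjunct.concat] at hT hS hI
    apply hrs c hc (fun x => v' (Sum.inl x))
    refine ⟨?_, ?_, ?_⟩
    · intro l hl
      obtain ⟨m, rfl⟩ := List.mem_iff_get.mp hl
      have hb := hg.1 c hc _ hl
      rw [hb]
      simp only [if_true]
      have h2 := hT _ (List.mem_ofFn.mpr ⟨m, rfl⟩)
      rw [hb] at h2
      simp only [if_true] at h2
      have h3 := h2 (c.tlits.get m).2.1
      have hfun : (fun i => v' (Sum.inl ((c.tlits.get m).2.2 i)))
          = (fun i => v' (@dite _ ((e.symm (e ⟨(c.tlits.get m).2.1, i⟩)).1 = (c.tlits.get m).2.1)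
              (instDecidableEqFin t _ _) (fun h => Sum.inl ((c.tlits.get m).2.2
                (Fin.cast (congrArg a h) (e.symm (e ⟨(c.tlits.get m).2.1, i⟩)).2)))
              (fun _ => Sum.inr (m, e ⟨(c.tlits.get m).2.1, i⟩)))) := by
        funext i
        have key := e.symm_apply_apply ⟨(c.tlits.get m).2.1, i⟩
        have hcond : (e.symm (e ⟨(c.tlits.get m).2.1, i⟩)).1 = (c.tlits.get m).2.1 :=
          congrArg Sigma.fst key
        refine congrArg v' (Eq.trans ?_ (dif_pos hcond).symm)
        exact congrArg (fun y => Sum.inl ((c.tlits.get m).2.2 y)) (cast_snd_eq key hcond).symm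
      exact hfun ▸ h3
    · intro l hl
      exact hS _ (List.mem_map.mpr ⟨l, hl, rfl⟩)
    · intro p hp
      exact hI _ (List.mem_map.mpr ⟨p, hp, rfl⟩)
  · rintro ⟨rs, hrs⟩
    refine ⟨rs, ?_⟩
    intro c hc v hH
    obtain ⟨hT, hS, hI⟩ := hH
    have hne : ∀ j : Fin t, ∃ wj, wj ∈ A.rel j := by
      intro j
      obtain ⟨l, hl, hlj⟩ := henr c hc j
      have hb := hg.1 c hc l hl
      have h2 := hT l hl
      rw [hb] at h2
      simp only [if_true] at h2
      subst hlj
      exact ⟨_, h2⟩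
    choose w hw using hne
    have hmem : Conjunct.concat e c ∈ (Φ.concat e).conjs := List.mem_map.mpr ⟨c, hc, rfl⟩
    apply hrs (Conjunct.concat e c) hmem
      (Sum.elim v (fun mk => w (e.symm mk.2).1 (e.symm mk.2).2))
    refine ⟨?_, ?_, ?_⟩
    · intro l hl
      have hl' : l ∈ List.ofFn (fun m : Fin c.tlits.length =>
          ((c.tlits.get m).1, (⟨(), fun k =>
            @dite _ ((e.symm k).1 = (c.tlits.get m).2.1) (instDecidableEqFin t _ _) (fun h =>
              Sum.inl ((c.tlits.get m).2.2 (Fin.cast (congrArg a h) (e.symm k).2)))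
            (fun _ => Sum.inr (m, k))⟩ : Σ r : (oneSig t a).symb,
              Fin ((oneSig t a).arity r) → (Conjunct.concat e c).Vars))) := hl
      obtain ⟨m, rfl⟩ := List.mem_ofFn.mp hl'
      have hb := hg.1 c hc _ (c.tlits.get_mem m)
      simp only [hb, if_true]
      intro j
      by_cases h : j = (c.tlits.get m).2.1
      · subst h
        have h2 := hT _ (c.tlits.get_mem m)
        rw [hb] at h2
        simp only [if_true] at h2
        have hfun : (fun i => Sum.elim v
              (fun mk : Fin c.tlits.length × Fin (∑ j, a j) =>
                w (e.symm mk.2).1 (e.symm mk.2).2)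
              (@dite _ ((e.symm (e ⟨(c.tlits.get m).2.1, i⟩)).1 = (c.tlits.get m).2.1)
                (instDecidableEqFin t _ _) (fun hh => Sum.inl ((c.tlits.get m).2.2
                  (Fin.cast (congrArg a hh) (e.symm (e ⟨(c.tlits.get m).2.1, i⟩)).2)))
                (fun _ => Sum.inr (m, e ⟨(c.tlits.get m).2.1, i⟩))))
            = (fun i => v ((c.tlits.get m).2.2 i)) := by
          funext i
          have key := e.symm_apply_apply ⟨(c.tlits.get m).2.1, i⟩
          have hcond : (e.symm (e ⟨(c.tlits.get m).2.1, i⟩)).1 = (c.tlits.get m).2.1 := congrArg Sigma.fst key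
          rw [dif_pos hcond]
          exact congrArg (fun y => v ((c.tlits.get m).2.2 y)) (cast_snd_eq key hcond)
        exact hfun ▸ h2
      · have hfun : (fun i => Sum.elim v
              (fun mk : Fin c.tlits.length × Fin (∑ j, a j) =>
                w (e.symm mk.2).1 (e.symm mk.2).2)
              (@dite _ ((e.symm (e ⟨j, i⟩)).1 = (c.tlits.get m).2.1)
                (instDecidableEqFin t _ _) (fun hh => Sum.inl ((c.tlits.get m).2.2
                  (Fin.cast (congrArg a hh) (e.symm (e ⟨j, i⟩)).2)))
                (fun _ => Sum.inr (m, e ⟨j, i⟩))))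
            = (fun i => w j i) := by
          funext i
          have key := e.symm_apply_apply ⟨j, i⟩
          have hcond : ¬ (e.symm (e ⟨j, i⟩)).1 = (c.tlits.get m).2.1 := by
            rw [congrArg Sigma.fst key]; exact h
          rw [dif_neg hcond]
          exact sigma_app w key
        exact hfun ▸ hw j
    · intro l hl
      obtain ⟨l0, hl0, rfl⟩ := List.mem_map.mp hl
      exact hS l0 hl0
    · intro p hp
      obtain ⟨p0, hp0, rfl⟩ := List.mem_map.mp hp
      exact hI p0 hp0
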